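/- Let B be a ball-basis in a measure space (X, M, μ) and 1 ≤ r < ∞. For any ball B ∈ B and f ∈ L^r(X), ⟨f⟩*_B ≤ essinf_{y∈B} M f(y) ≤ C ⟨f⟩*_B, where ⟨f⟩*_B = sup_{A ∈ B, A ⊇ B} (μ(A)⁻¹ ∫_A |f|^r)^{1/r}, M f(x) = sup_{B ∋ x} (μ(B)⁻¹ ∫_B |f|^r)^{1/r}, and C depends only on the hull constant K. -/

import Mathlib

open MeasureTheory ENNReal Set Filter

noncomputable section

/-- A ball-basis on a measure space, with hull constant `K` (conditions B1–B4). -/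
structure BallBasis (X : Type*) [MeasurableSpace X] (μ : Measure X) where
  balls : Set (Set X)
  K : ℝ≥0∞
  K_pos : 0 < K
  K_lt_top : K < ∞
  meas : ∀ B ∈ balls, MeasurableSet B
  pos : ∀ B ∈ balls, 0 < μ B
  lt_top : ∀ B ∈ balls, μ B < ∞
  pair : ∀ x y : X, ∃ B ∈ balls, x ∈ B ∧ y ∈ B
  approx : ∀ E : Set X, MeasurableSet E → ∀ ε : ℝ≥0∞, 0 < ε →
    ∃ Bs : ℕ → Set X, (∀ k, Bs k ∈ balls) ∧ μ (symmDiff E (⋃ k, Bs k)) < ε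
  hull : Set X → Set X
  hull_mem : ∀ B ∈ balls, hull B ∈ balls
  hull_sub : ∀ B ∈ balls, ∀ A ∈ balls, μ A ≤ 2 * μ B → (A ∩ B).Nonempty → A ⊆ hull B
  hull_bound : ∀ B ∈ balls, μ (hull B) ≤ K * μ B

/-- The doubling property of a ball-basis, with doubling constant `η > 2`. -/
def BallBasis.Doubling {X : Type*} [MeasurableSpace X] {μ : Measure X}
    (𝓑 : BallBasis X μ) (η : ℝ≥0∞) : Prop :=
  2 < η ∧ ∀ A ∈ 𝓑.balls, μ A < μ (univ : Set X) / 2 →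
    ∃ B ∈ 𝓑.balls, A ⊆ B ∧ 2 * μ A ≤ μ B ∧ μ B ≤ η * μ A

variable {X : Type*} [MeasurableSpace X]

/-- Oscillation `OSC_E(f) = sup_{x,x' ∈ E} |f x − f x'|` of a real function, valued in `ℝ≥0∞`. -/
def osc (f : X → ℝ) (E : Set X) : ℝ≥0∞ :=
  ⨆ x ∈ E, ⨆ y ∈ E, ENNReal.ofReal (f x - f y)

/-- Oscillation of an `ℝ≥0∞`-valued function. -/
def eosc (F : X → ℝ≥0∞) (E : Set X) : ℝ≥0∞ :=
  ⨆ x ∈ E, ⨆ y ∈ E, (F x - F y)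

/-- `OSC_{B,α}(f)`: the infimum of `OSC_E(f)` over measurable `E ⊆ B` with `μ(E) ≥ α μ(B)`. -/
def OSCa (μ : Measure X) (f : X → ℝ) (B : Set X) (α : ℝ) : ℝ≥0∞ :=
  ⨅ (E : Set X) (_ : MeasurableSet E) (_ : E ⊆ B)
    (_ : ENNReal.ofReal α * μ B ≤ μ E), osc f E

/-- `OSC_{B,α}` for `ℝ≥0∞`-valued functions. -/
def eOSCa (μ : Measure X) (F : X → ℝ≥0∞) (B : Set X) (α : ℝ) : ℝ≥0∞ :=
  ⨅ (E : Set X) (_ : MeasurableSet E) (_ : E ⊆ B)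
    (_ : ENNReal.ofReal α * μ B ≤ μ E), eosc F E

/-- `INF_{B,α}(g)`: the infimum of `‖g‖_{L^∞(E)}` over measurable `E ⊆ B` with `μ(E) ≥ α μ(B)`. -/
def INFa (μ : Measure X) (g : X → ℝ) (B : Set X) (α : ℝ) : ℝ≥0∞ :=
  ⨅ (E : Set X) (_ : MeasurableSet E) (_ : E ⊆ B)
    (_ : ENNReal.ofReal α * μ B ≤ μ E),
      essSup (fun x => ENNReal.ofReal |g x|) (μ.restrict E)

/-- `INF_B(g) = essinf_{y ∈ B} |g y|`. -/
def eINF (μ : Measure X) (g : X → ℝ) (B : Set X) : ℝ≥0∞ :=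
  essInf (fun x => ENNReal.ofReal |g x|) (μ.restrict B)

/-- A density point of a set `F` with respect to a ball-basis. -/
def IsDensityPoint (μ : Measure X) (𝓑 : BallBasis X μ) (F : Set X) (x : X) : Prop :=
  x ∈ F ∧ ∀ γ : ℝ, 0 < γ → γ < 1 →
    ∃ B ∈ 𝓑.balls, x ∈ B ∧ ENNReal.ofReal γ * μ B < μ (B ∩ F)

/-- A median of `f` over `B`. -/
def IsMedian (μ : Measure X) (f : X → ℝ) (B : Set X) (m : ℝ) : Prop :=
  μ {x ∈ B | m < f x} ≤ μ B / 2 ∧ μ {x ∈ B | f x < m} ≤ μ B / 2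

/-- A median of an `ℝ≥0∞`-valued function over `B`. -/
def IsMedianE (μ : Measure X) (F : X → ℝ≥0∞) (B : Set X) (m : ℝ≥0∞) : Prop :=
  μ {x ∈ B | m < F x} ≤ μ B / 2 ∧ μ {x ∈ B | F x < m} ≤ μ B / 2

/-- `⟨f⟩_B = (μ(B)⁻¹ ∫_B |f|^r)^{1/r}`. -/
def avgPow (μ : Measure X) (f : X → ℝ) (B : Set X) (r : ℝ) : ℝ≥0∞ :=
  ((μ B)⁻¹ * ∫⁻ x in B, (ENNReal.ofReal |f x|) ^ r ∂μ) ^ (1 / r)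

/-- `f_B = μ(B)⁻¹ ∫_B f`. -/
def intAvg (μ : Measure X) (f : X → ℝ) (B : Set X) : ℝ :=
  (∫ x in B, f x ∂μ) / (μ B).toReal

/-- `⟨f⟩_{#,B} = (μ(B)⁻¹ ∫_B |f − f_B|^r)^{1/r}`. -/
def sharpAvg (μ : Measure X) (f : X → ℝ) (B : Set X) (r : ℝ) : ℝ≥0∞ :=
  ((μ B)⁻¹ * ∫⁻ x in B, (ENNReal.ofReal |f x - intAvg μ f B|) ^ r ∂μ) ^ (1 / r)

/-- `⟨f⟩*_B = sup_{A ∈ 𝓑, A ⊇ B} ⟨f⟩_A`. -/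
def starAvg (μ : Measure X) (𝓑 : BallBasis X μ) (f : X → ℝ) (B : Set X) (r : ℝ) : ℝ≥0∞ :=
  ⨆ (A : Set X) (_ : A ∈ 𝓑.balls) (_ : B ⊆ A), avgPow μ f A r

/-- `⟨f⟩*_{#,B} = sup_{A ∈ 𝓑, A ⊇ B} ⟨f⟩_{#,A}`. -/
def starSharp (μ : Measure X) (𝓑 : BallBasis X μ) (f : X → ℝ) (B : Set X) (r : ℝ) : ℝ≥0∞ :=
  ⨆ (A : Set X) (_ : A ∈ 𝓑.balls) (_ : B ⊆ A), sharpAvg μ f A r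

/-- The maximal function `M f(x) = sup_{B ∋ x} ⟨f⟩_B`. -/
def Mmax (μ : Measure X) (𝓑 : BallBasis X μ) (f : X → ℝ) (r : ℝ) (x : X) : ℝ≥0∞ :=
  ⨆ (B : Set X) (_ : B ∈ 𝓑.balls) (_ : x ∈ B), avgPow μ f B r

/-- The sharp maximal function `M_# f(x) = sup_{B ∋ x} ⟨f⟩_{#,B}`. -/
def Msharp (μ : Measure X) (𝓑 : BallBasis X μ) (f : X → ℝ) (r : ℝ) (x : X) : ℝ≥0∞ :=
  ⨆ (B : Set X) (_ : B ∈ 𝓑.balls) (_ : x ∈ B), sharpAvg μ f B r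

/-- The local sharp maximal function of Jawerth–Torchinsky,
`M_{#,α} f(x) = sup_{B ∋ x} OSC_{B,α}(f)`. -/
def Mla (μ : Measure X) (𝓑 : BallBasis X μ) (f : X → ℝ) (α : ℝ) (x : X) : ℝ≥0∞ :=
  ⨆ (B : Set X) (_ : B ∈ 𝓑.balls) (_ : x ∈ B), OSCa μ f B α

/-- `|a − b|` in `ℝ≥0∞`. -/
def ediff (a b : ℝ≥0∞) : ℝ≥0∞ := (a - b) ⊔ (b - a)

/-- A subadditive operator. -/
def SubadditiveOp (T : (X → ℝ) → (X → ℝ)) : Prop :=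
  (∀ (c : ℝ) (f : X → ℝ) (x : X), |T (c • f) x| = |c| * |T f x|) ∧
  (∀ (f g : X → ℝ) (x : X), |T (f + g) x| ≤ |T f x| + |T g x|)

/-- The localization property of a bounded oscillation (BO) operator, with constant `L`:
`OSC_B (T (f · 1_{X ∖ B*})) ≤ L ⟨f⟩*_B` for all `f ∈ L^r` and balls `B`. -/
def HasBOconst (μ : Measure X) (𝓑 : BallBasis X μ) (r : ℝ)
    (T : (X → ℝ) → (X → ℝ)) (L : ℝ≥0∞) : Prop :=
  ∀ f : X → ℝ, MemLp f (ENNReal.ofReal r) μ → ∀ B ∈ 𝓑.balls,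
    osc (T ((𝓑.hull B)ᶜ.indicator f)) B ≤ L * starAvg μ 𝓑 f B r

/-- The weak-`L^r` inequality for `T`, with norm `N`. -/
def WeakType (μ : Measure X) (r : ℝ) (T : (X → ℝ) → (X → ℝ)) (N : ℝ≥0∞) : Prop :=
  ∀ f : X → ℝ, MemLp f (ENNReal.ofReal r) μ → ∀ lam : ℝ, 0 < lam →
    μ {x | lam < |T f x|} ≤ (N / ENNReal.ofReal lam) ^ r *
      ∫⁻ x, (ENNReal.ofReal |f x|) ^ r ∂μ
/-! ### Auxiliary lemmas -/

section AuxLemmas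

variable {μ : Measure X}

lemma essInf_le_of_pos_meas {ν : Measure X} {g : X → ℝ≥0∞} {G : Set X} {c : ℝ≥0∞}
    (hG : 0 < ν G) (h : ∀ y ∈ G, g y ≤ c) : essInf g ν ≤ c := by
  by_contra hlt
  push_neg at hlt
  have hae : ∀ᵐ y ∂ν, c < g y := ae_lt_of_lt_essInf hlt
  rw [Filter.eventually_iff, mem_ae_iff] at hae
  have hsub : G ⊆ {y | c < g y}ᶜ := fun y hy => by
    simp only [mem_compl_iff, mem_setOf_eq, not_lt]; exact h y hy
  exact absurd (measure_mono_null hsub hae) hG.ne'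

namespace BallBasis

variable (𝓑 : BallBasis X μ)

lemma self_subset_hull {B : Set X} (hB : B ∈ 𝓑.balls) : B ⊆ 𝓑.hull B :=
  𝓑.hull_sub B hB B hB (le_mul_of_one_le_left (zero_le) one_le_two)
    (by rw [inter_self]; exact nonempty_of_measure_ne_zero (𝓑.pos B hB).ne')

lemma one_le_K {B : Set X} (hB : B ∈ 𝓑.balls) : 1 ≤ 𝓑.K := by
  have hμB0 : μ B ≠ 0 := (𝓑.pos B hB).ne'
  have hμBtop : μ B ≠ ∞ := (𝓑.lt_top B hB).ne
  have h1 : μ B * 1 ≤ μ B * 𝓑.K := by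
    rw [mul_one, mul_comm]
    exact le_trans (measure_mono (𝓑.self_subset_hull hB)) (𝓑.hull_bound B hB)
  exact (ENNReal.mul_le_mul_iff_right hμB0 hμBtop).mp h1

lemma le_starAvg (f : X → ℝ) (r : ℝ) {B A : Set X}
    (hA : A ∈ 𝓑.balls) (hBA : B ⊆ A) : avgPow μ f A r ≤ starAvg μ 𝓑 f B r := by
  unfold starAvg
  exact le_iSup_of_le A (le_iSup_of_le hA (le_iSup_of_le hBA le_rfl))

lemma starAvg_le (f : X → ℝ) (r : ℝ) {B : Set X} {c : ℝ≥0∞}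
    (h : ∀ A ∈ 𝓑.balls, B ⊆ A → avgPow μ f A r ≤ c) : starAvg μ 𝓑 f B r ≤ c := by
  unfold starAvg
  exact iSup_le fun A => iSup_le fun h1 => iSup_le fun h2 => h A h1 h2

lemma le_Mmax (f : X → ℝ) (r : ℝ) {A : Set X} {y : X}
    (hA : A ∈ 𝓑.balls) (hyA : y ∈ A) : avgPow μ f A r ≤ Mmax μ 𝓑 f r y := by
  unfold Mmax
  exact le_iSup_of_le A (le_iSup_of_le hA (le_iSup_of_le hyA le_rfl))

lemma Mmax_le (f : X → ℝ) (r : ℝ) {y : X} {c : ℝ≥0∞}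
    (h : ∀ A ∈ 𝓑.balls, y ∈ A → avgPow μ f A r ≤ c) : Mmax μ 𝓑 f r y ≤ c := by
  unfold Mmax
  exact iSup_le fun A => iSup_le fun h1 => iSup_le fun h2 => h A h1 h2

/-- If `B ⊆ A*`, then `⟨f⟩_A ≤ K ⟨f⟩*_B`. -/
lemma avg_le_K_starAvg {r : ℝ} (hr : 1 ≤ r) (f : X → ℝ)
    {B A : Set X} (_hB : B ∈ 𝓑.balls) (hA : A ∈ 𝓑.balls) (hBA : B ⊆ 𝓑.hull A) :
    avgPow μ f A r ≤ 𝓑.K * starAvg μ 𝓑 f B r := by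
  have hr0 : (0:ℝ) < r := lt_of_lt_of_le one_pos hr
  have h1r : (0:ℝ) ≤ 1 / r := by positivity
  have hHmem : 𝓑.hull A ∈ 𝓑.balls := 𝓑.hull_mem A hA
  have hAH : A ⊆ 𝓑.hull A := 𝓑.self_subset_hull hA
  have hμA0 : μ A ≠ 0 := (𝓑.pos A hA).ne'
  have hμAtop : μ A ≠ ∞ := (𝓑.lt_top A hA).ne
  have hμH0 : μ (𝓑.hull A) ≠ 0 := (𝓑.pos _ hHmem).ne'
  have hμHtop : μ (𝓑.hull A) ≠ ∞ := (𝓑.lt_top _ hHmem).ne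
  have hK1 : 1 ≤ 𝓑.K := 𝓑.one_le_K hA
  have key : (μ A)⁻¹ * ∫⁻ x in A, (ENNReal.ofReal |f x|) ^ r ∂μ
      ≤ 𝓑.K * ((μ (𝓑.hull A))⁻¹ * ∫⁻ x in 𝓑.hull A, (ENNReal.ofReal |f x|) ^ r ∂μ) := by
    have h2 : (∫⁻ x in A, (ENNReal.ofReal |f x|) ^ r ∂μ)
        ≤ ∫⁻ x in 𝓑.hull A, (ENNReal.ofReal |f x|) ^ r ∂μ := lintegral_mono_set hAH
    have h3 : (μ A)⁻¹ * μ (𝓑.hull A) ≤ 𝓑.K := by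
      calc (μ A)⁻¹ * μ (𝓑.hull A) ≤ (μ A)⁻¹ * (𝓑.K * μ A) :=
            mul_le_mul_right (𝓑.hull_bound A hA) _
        _ = 𝓑.K * ((μ A)⁻¹ * μ A) := by ring
        _ = 𝓑.K := by rw [ENNReal.inv_mul_cancel hμA0 hμAtop, mul_one]
    calc (μ A)⁻¹ * ∫⁻ x in A, (ENNReal.ofReal |f x|) ^ r ∂μ
        ≤ (μ A)⁻¹ * ∫⁻ x in 𝓑.hull A, (ENNReal.ofReal |f x|) ^ r ∂μ := mul_le_mul_right h2 _
      _ = ((μ A)⁻¹ * μ (𝓑.hull A)) *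
          ((μ (𝓑.hull A))⁻¹ * ∫⁻ x in 𝓑.hull A, (ENNReal.ofReal |f x|) ^ r ∂μ) := by
          rw [mul_assoc, ← mul_assoc (μ (𝓑.hull A)), ENNReal.mul_inv_cancel hμH0 hμHtop, one_mul]
      _ ≤ 𝓑.K * ((μ (𝓑.hull A))⁻¹ * ∫⁻ x in 𝓑.hull A, (ENNReal.ofReal |f x|) ^ r ∂μ) :=
          mul_le_mul_left h3 _
  calc avgPow μ f A r
      = ((μ A)⁻¹ * ∫⁻ x in A, (ENNReal.ofReal |f x|) ^ r ∂μ) ^ (1/r) := rfl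
    _ ≤ (𝓑.K * ((μ (𝓑.hull A))⁻¹ *
          ∫⁻ x in 𝓑.hull A, (ENNReal.ofReal |f x|) ^ r ∂μ)) ^ (1/r) :=
        ENNReal.rpow_le_rpow key h1r
    _ = 𝓑.K ^ (1/r) * avgPow μ f (𝓑.hull A) r := by
        rw [ENNReal.mul_rpow_of_nonneg _ _ h1r]; rfl
    _ ≤ 𝓑.K * starAvg μ 𝓑 f B r := by
        refine mul_le_mul' ?_ (𝓑.le_starAvg f r hHmem hBA)
        calc 𝓑.K ^ (1/r) ≤ 𝓑.K ^ (1:ℝ) :=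
              ENNReal.rpow_le_rpow_of_exponent_le hK1 (by rw [div_le_one hr0]; exact hr)
          _ = 𝓑.K := ENNReal.rpow_one _

/-- The weak-type bound for the restricted maximal function, via the Vitali-type covering
argument with hulls. -/
lemma weak_bound (g : X → ℝ≥0∞) {W : Set X}
    (hWfin : μ W ≠ ∞)
    {lam : ℝ≥0∞} (hlam0 : lam ≠ 0) (hlamtop : lam ≠ ∞)
    (hIfin : (∫⁻ x in W, g x ∂μ) ≠ ∞) :
    μ {y | ∃ A ∈ 𝓑.balls, y ∈ A ∧ A ⊆ W ∧ lam * μ A < ∫⁻ x in A, g x ∂μ}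
      ≤ 𝓑.K * (∫⁻ x in W, g x ∂μ) / lam := by
  set I := ∫⁻ x in W, g x ∂μ with hI
  set t : Set (Set X) := {A | A ∈ 𝓑.balls ∧ A ⊆ W ∧ lam * μ A < ∫⁻ x in A, g x ∂μ} with ht
  have hmeasA : ∀ A ∈ t, μ A ≤ I / lam := by
    intro A hA
    rw [ENNReal.le_div_iff_mul_le (Or.inl hlam0) (Or.inl hlamtop), mul_comm]
    exact le_trans hA.2.2.le (lintegral_mono_set hA.2.1)
  have hIdiv : I / lam ≠ ∞ := (ENNReal.div_lt_top hIfin hlam0).ne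
  obtain ⟨u, hut, hdisj, hcov⟩ := Vitali.exists_disjoint_subfamily_covering_enlargement
    (id : Set X → Set X) t (fun A => (μ A).toReal) 2 one_lt_two
    (fun A _ => ENNReal.toReal_nonneg) (I / lam).toReal
    (fun A hA => (ENNReal.toReal_le_toReal (𝓑.lt_top A hA.1).ne hIdiv).mpr (hmeasA A hA))
    (fun A hA => nonempty_of_measure_ne_zero (𝓑.pos A hA.1).ne')
  have humeas : ∀ a : u, MeasurableSet (a : Set X) := fun a => 𝓑.meas a (hut a.2).1
  have hupos : ∀ a : u, 0 < μ (a : Set X) := fun a => 𝓑.pos a (hut a.2).1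
  have husubW : ∀ a : u, (a : Set X) ⊆ W := fun a => (hut a.2).2.1
  have hudisj : Pairwise (Function.onFun Disjoint fun a : u => (a : Set X)) := fun a b hab =>
    hdisj a.2 b.2 (Subtype.coe_injective.ne hab)
  have hcnt : Countable u := by
    have h1 := Measure.countable_meas_pos_of_disjoint_of_meas_iUnion_ne_top μ humeas hudisj
      (ne_top_of_le_ne_top hWfin (measure_mono (iUnion_subset husubW)))
    have h2 : {a : u | 0 < μ (a : Set X)} = univ := eq_univ_of_forall fun a => hupos a
    rw [h2] at h1
    exact Set.countable_univ_iff.mp h1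
  have hsub : {y | ∃ A ∈ 𝓑.balls, y ∈ A ∧ A ⊆ W ∧ lam * μ A < ∫⁻ x in A, g x ∂μ}
      ⊆ ⋃ a : u, 𝓑.hull (a : Set X) := by
    rintro y ⟨A, hA, hyA, hAW, hAint⟩
    obtain ⟨b, hbu, hnon, hle⟩ := hcov A ⟨hA, hAW, hAint⟩
    have hbballs : b ∈ 𝓑.balls := (hut hbu).1
    have h2top : (2 : ℝ≥0∞) * μ b ≠ ∞ :=
      ENNReal.mul_ne_top ENNReal.ofNat_ne_top (𝓑.lt_top b hbballs).ne
    have hAb : μ A ≤ 2 * μ b := by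
      rw [← ENNReal.toReal_le_toReal (𝓑.lt_top A hA).ne h2top, ENNReal.toReal_mul]
      simpa using hle
    have hsubhull : A ⊆ 𝓑.hull b := 𝓑.hull_sub b hbballs A hA hAb hnon
    exact mem_iUnion.mpr ⟨⟨b, hbu⟩, hsubhull hyA⟩
  refine le_trans (measure_mono hsub) ?_
  refine le_trans (measure_iUnion_le fun a : u => 𝓑.hull (a : Set X)) ?_
  have key : μ (⋃ a : u, (a : Set X)) ≤ I / lam := by
    rw [ENNReal.le_div_iff_mul_le (Or.inl hlam0) (Or.inl hlamtop)]
    calc μ (⋃ a : u, (a : Set X)) * lam = ∑' a : u, μ (a : Set X) * lam := by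
          rw [measure_iUnion hudisj humeas, ENNReal.tsum_mul_right]
      _ ≤ ∑' a : u, ∫⁻ x in (a : Set X), g x ∂μ := ENNReal.tsum_le_tsum fun a => by
          rw [mul_comm]; exact (hut a.2).2.2.le
      _ = ∫⁻ x in ⋃ a : u, (a : Set X), g x ∂μ := (lintegral_iUnion humeas hudisj g).symm
      _ ≤ I := lintegral_mono_set (iUnion_subset husubW)
  calc (∑' a : u, μ (𝓑.hull (a : Set X)))
      ≤ ∑' a : u, 𝓑.K * μ (a : Set X) :=
        ENNReal.tsum_le_tsum fun a => 𝓑.hull_bound a (hut a.2).1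
    _ = 𝓑.K * ∑' a : u, μ (a : Set X) := ENNReal.tsum_mul_left
    _ = 𝓑.K * μ (⋃ a : u, (a : Set X)) := by rw [measure_iUnion hudisj humeas]
    _ ≤ 𝓑.K * (I / lam) := mul_le_mul_right key _
    _ = 𝓑.K * I / lam := (mul_div_assoc _ _ _).symm

end BallBasis

end AuxLemmas

/-- `⟨f⟩*_B ≤ essinf_B M f ≲ ⟨f⟩*_B`. -/
theorem starAvg_comparable_essInf_Mmax
    {X : Type*} [MeasurableSpace X] (μ : Measure X) (𝓑 : BallBasis X μ)
    (r : ℝ) (hr : 1 ≤ r) :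
    ∃ C : ℝ, 0 < C ∧
      ∀ f : X → ℝ, MemLp f (ENNReal.ofReal r) μ →
        ∀ B ∈ 𝓑.balls,
          starAvg μ 𝓑 f B r ≤ essInf (fun y => Mmax μ 𝓑 f r y) (μ.restrict B) ∧
          essInf (fun y => Mmax μ 𝓑 f r y) (μ.restrict B) ≤
            ENNReal.ofReal C * starAvg μ 𝓑 f B r := by
  classical
  have hK0 : (0:ℝ) < 𝓑.K.toReal := ENNReal.toReal_pos 𝓑.K_pos.ne' 𝓑.K_lt_top.ne
  refine ⟨2 * 𝓑.K.toReal ^ 2, by positivity, ?_⟩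
  have hC : ENNReal.ofReal (2 * 𝓑.K.toReal ^ 2) = 2 * 𝓑.K * 𝓑.K := by
    rw [ENNReal.ofReal_mul (by norm_num), ENNReal.ofReal_ofNat, sq,
      ENNReal.ofReal_mul hK0.le, ENNReal.ofReal_toReal 𝓑.K_lt_top.ne, mul_assoc]
  intro f _hf B hB
  have hr0 : (0:ℝ) < r := lt_of_lt_of_le one_pos hr
  have h1r : (0:ℝ) ≤ 1 / r := by positivity
  have hμB0 : μ B ≠ 0 := (𝓑.pos B hB).ne'
  have hμBtop : μ B ≠ ∞ := (𝓑.lt_top B hB).ne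
  have hBmeas : MeasurableSet B := 𝓑.meas B hB
  have hK1 : 1 ≤ 𝓑.K := 𝓑.one_le_K hB
  have hKle : 𝓑.K ≤ 2 * 𝓑.K * 𝓑.K := by
    calc 𝓑.K = 1 * 𝓑.K := (one_mul _).symm
      _ ≤ (2 * 𝓑.K) * 𝓑.K := mul_le_mul_left
          (le_trans hK1 (le_mul_of_one_le_left (zero_le) one_le_two)) _
  have h2KK1 : (1:ℝ≥0∞) ≤ 2 * 𝓑.K * 𝓑.K := le_trans hK1 hKle
  constructor
  · -- lower bound: `⟨f⟩*_B ≤ essinf_B M f`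
    refine 𝓑.starAvg_le f r fun A hA hBA => ?_
    refine le_essInf_of_ae_le _ ?_
    exact (ae_restrict_iff' hBmeas).mpr
      (ae_of_all _ fun y hy => 𝓑.le_Mmax f r hA (hBA hy))
  · -- upper bound
    rw [hC]
    set S := starAvg μ 𝓑 f B r with hSdef
    by_cases hS : S = ∞
    · rw [hS, ENNReal.mul_top (mul_ne_zero (mul_ne_zero two_ne_zero 𝓑.K_pos.ne') 𝓑.K_pos.ne')]
      exact le_top
    set W := 𝓑.hull B with hW
    have hWmem : W ∈ 𝓑.balls := 𝓑.hull_mem B hB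
    have hWmeas : MeasurableSet W := 𝓑.meas W hWmem
    have hμW0 : μ W ≠ 0 := (𝓑.pos W hWmem).ne'
    have hμWtop : μ W ≠ ∞ := (𝓑.lt_top W hWmem).ne
    have hBW : B ⊆ W := 𝓑.self_subset_hull hB
    set I := ∫⁻ x in W, (ENNReal.ofReal |f x|) ^ r ∂μ with hI
    have havgW : avgPow μ f W r ≤ S := hSdef ▸ 𝓑.le_starAvg f r hWmem hBW
    have h1 : avgPow μ f W r ^ r = (μ W)⁻¹ * I := by
      show (((μ W)⁻¹ * ∫⁻ x in W, (ENNReal.ofReal |f x|) ^ r ∂μ) ^ (1/r)) ^ r = _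
      rw [← ENNReal.rpow_mul, one_div, inv_mul_cancel₀ hr0.ne', ENNReal.rpow_one, hI]
    have hIle : I ≤ 𝓑.K * μ B * S ^ r := by
      calc I = μ W * ((μ W)⁻¹ * I) := by
            rw [← mul_assoc, ENNReal.mul_inv_cancel hμW0 hμWtop, one_mul]
        _ = μ W * avgPow μ f W r ^ r := by rw [h1]
        _ ≤ (𝓑.K * μ B) * S ^ r :=
            mul_le_mul' (𝓑.hull_bound B hB) (ENNReal.rpow_le_rpow havgW hr0.le)
    have hItop : I ≠ ∞ := by
      refine ne_top_of_le_ne_top ?_ hIle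
      exact ENNReal.mul_ne_top (ENNReal.mul_ne_top 𝓑.K_lt_top.ne hμBtop)
        (ENNReal.rpow_lt_top_of_nonneg hr0.le hS).ne
    have hbig : ∀ A ∈ 𝓑.balls, ∀ y, y ∈ A → y ∈ B → ¬ (μ A ≤ 2 * μ B) →
        avgPow μ f A r ≤ 𝓑.K * S := by
      intro A hA y hyA hyB hnle
      rw [hSdef]
      refine 𝓑.avg_le_K_starAvg hr f hB hA ?_
      refine 𝓑.hull_sub A hA B hB ?_ ⟨y, hyB, hyA⟩
      calc μ B ≤ 2 * μ B := le_mul_of_one_le_left (zero_le) one_le_two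
        _ ≤ μ A := (not_le.mp hnle).le
        _ ≤ 2 * μ A := le_mul_of_one_le_left (zero_le) one_le_two
    by_cases hI0 : I = 0
    · -- degenerate case: `f = 0` a.e. on `W`
      refine essInf_le_of_pos_meas (G := B) ?_ ?_
      · rw [Measure.restrict_apply_self]
        exact 𝓑.pos B hB
      · intro y hy
        refine 𝓑.Mmax_le f r fun A hA hyA => ?_
        by_cases h2 : μ A ≤ 2 * μ B
        · have hAW : A ⊆ W := 𝓑.hull_sub B hB A hA h2 ⟨y, hyA, hy⟩
          have hint : (∫⁻ x in A, (ENNReal.ofReal |f x|) ^ r ∂μ) = 0 :=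
            le_antisymm (hI0 ▸ hI ▸ lintegral_mono_set hAW) (zero_le)
          have havg : avgPow μ f A r = 0 := by
            show ((μ A)⁻¹ * ∫⁻ x in A, (ENNReal.ofReal |f x|) ^ r ∂μ) ^ (1/r) = 0
            rw [hint, mul_zero, ENNReal.zero_rpow_of_pos (by positivity)]
          rw [havg]; exact zero_le
        · exact le_trans (hbig A hA y hyA hy h2) (mul_le_mul_left hKle S)
    · -- main case: weak-type estimate on the bad set
      set lam := 2 * 𝓑.K * I / μ B with hlam
      have h2KI0 : 2 * 𝓑.K * I ≠ 0 := mul_ne_zero (mul_ne_zero two_ne_zero 𝓑.K_pos.ne') hI0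
      have h2KItop : 2 * 𝓑.K * I ≠ ∞ :=
        ENNReal.mul_ne_top (ENNReal.mul_ne_top ENNReal.ofNat_ne_top 𝓑.K_lt_top.ne) hItop
      have hlam0 : lam ≠ 0 := (ENNReal.div_pos h2KI0 hμBtop).ne'
      have hlamtop : lam ≠ ∞ := (ENNReal.div_lt_top h2KItop hμB0).ne
      have hweak := 𝓑.weak_bound (fun x => (ENNReal.ofReal |f x|) ^ r) hμWtop hlam0 hlamtop
        (hI ▸ hItop)
      rw [← hI] at hweak
      set E := {y | ∃ A ∈ 𝓑.balls, y ∈ A ∧ A ⊆ W ∧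
        lam * μ A < ∫⁻ x in A, (ENNReal.ofReal |f x|) ^ r ∂μ} with hE
      have hEbound : μ E ≤ μ B / 2 := by
        refine hweak.trans (le_of_eq ?_)
        have hkey : (μ B / 2) * lam = 𝓑.K * I := by
          rw [hlam, div_eq_mul_inv, div_eq_mul_inv]
          calc μ B * 2⁻¹ * (2 * 𝓑.K * I * (μ B)⁻¹)
              = (2⁻¹ * 2) * (μ B * (μ B)⁻¹) * (𝓑.K * I) := by ring
            _ = 𝓑.K * I := by
                rw [ENNReal.inv_mul_cancel two_ne_zero ENNReal.ofNat_ne_top,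
                  ENNReal.mul_inv_cancel hμB0 hμBtop, one_mul, one_mul]
        calc 𝓑.K * I / lam = (μ B / 2) * lam / lam := by rw [hkey]
          _ = (μ B / 2) * (lam / lam) := mul_div_assoc _ _ _
          _ = μ B / 2 := by rw [ENNReal.div_self hlam0 hlamtop, mul_one]
      have hBE : 0 < μ (B \ E) := by
        by_contra hcon
        push_neg at hcon
        have h0 : μ (B \ E) = 0 := le_antisymm hcon (zero_le)
        have hcontr : μ B ≤ μ B / 2 := by
          calc μ B ≤ μ (B ∩ E) + μ (B \ E) := measure_le_inter_add_diff μ B E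
            _ = μ (B ∩ E) := by rw [h0, add_zero]
            _ ≤ μ E := measure_mono inter_subset_right
            _ ≤ μ B / 2 := hEbound
        exact absurd hcontr (not_le.mpr (ENNReal.half_lt_self hμB0 hμBtop))
      refine essInf_le_of_pos_meas (G := B \ E) ?_ ?_
      · rw [Measure.restrict_apply' hBmeas, Set.inter_eq_self_of_subset_left Set.diff_subset]
        exact hBE
      · rintro y ⟨hyB, hyE⟩
        refine 𝓑.Mmax_le f r fun A hA hyA => ?_
        by_cases h2 : μ A ≤ 2 * μ B
        · -- small ball: controlled by the stopping condition
          have hμA0 : μ A ≠ 0 := (𝓑.pos A hA).ne'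
          have hμAtop : μ A ≠ ∞ := (𝓑.lt_top A hA).ne
          have hAW : A ⊆ W := 𝓑.hull_sub B hB A hA h2 ⟨y, hyA, hyB⟩
          have hle : (∫⁻ x in A, (ENNReal.ofReal |f x|) ^ r ∂μ) ≤ lam * μ A := by
            by_contra hlt
            exact hyE ⟨A, hA, hyA, hAW, not_le.mp hlt⟩
          have havg : avgPow μ f A r ≤ lam ^ (1/r) := by
            show ((μ A)⁻¹ * ∫⁻ x in A, (ENNReal.ofReal |f x|) ^ r ∂μ) ^ (1/r) ≤ _
            refine ENNReal.rpow_le_rpow ?_ h1r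
            calc (μ A)⁻¹ * ∫⁻ x in A, (ENNReal.ofReal |f x|) ^ r ∂μ
                ≤ (μ A)⁻¹ * (lam * μ A) := mul_le_mul_right hle _
              _ = lam * ((μ A)⁻¹ * μ A) := by ring
              _ = lam := by rw [ENNReal.inv_mul_cancel hμA0 hμAtop, mul_one]
          have hlamle : lam ≤ 2 * 𝓑.K * 𝓑.K * S ^ r := by
            rw [hlam]
            have hnum : 2 * 𝓑.K * (𝓑.K * μ B * S ^ r) = (2 * 𝓑.K * 𝓑.K * S ^ r) * μ B := by
              ring
            calc 2 * 𝓑.K * I / μ B ≤ 2 * 𝓑.K * (𝓑.K * μ B * S ^ r) / μ B :=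
                  ENNReal.div_le_div_right (mul_le_mul_right hIle _) _
              _ = 2 * 𝓑.K * 𝓑.K * S ^ r := by
                  rw [hnum, mul_div_assoc, ENNReal.div_self hμB0 hμBtop, mul_one]
          calc avgPow μ f A r ≤ lam ^ (1/r) := havg
            _ ≤ (2 * 𝓑.K * 𝓑.K * S ^ r) ^ (1/r) := ENNReal.rpow_le_rpow hlamle h1r
            _ = (2 * 𝓑.K * 𝓑.K) ^ (1/r) * S := by
                rw [ENNReal.mul_rpow_of_nonneg _ _ h1r, ← ENNReal.rpow_mul,
                  mul_one_div, div_self hr0.ne', ENNReal.rpow_one]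
            _ ≤ (2 * 𝓑.K * 𝓑.K) * S := by
                refine mul_le_mul_left ?_ S
                calc (2 * 𝓑.K * 𝓑.K) ^ (1/r) ≤ (2 * 𝓑.K * 𝓑.K) ^ (1:ℝ) :=
                      ENNReal.rpow_le_rpow_of_exponent_le h2KK1
                        (by rw [div_le_one hr0]; exact hr)
                  _ = 2 * 𝓑.K * 𝓑.K := ENNReal.rpow_one _
        · exact le_trans (hbig A hA y hyA hyB h2) (mul_le_mul_left hKle S)
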